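/- Let F be a field and let A be either the 3×3 generalized Cartan matrix with rows (2,−2,−2), (−2,2,−2), (−2,−2,2), or the 3×3 generalized Cartan matrix with rows (2,−2,0), (−2,2,−2), (0,−2,2). Then in both cases K_2(A,F) is isomorphic to K_2(2,F) × (K_2(2,F)/⟨{u²,v}⟩) × (K_2(2,F)/⟨{u²,v}⟩). -/

import Mathlib

/-!
Common definitions: presentations of the abelian groups `K₂(F)`, `K₂(2,F)` and `K₂(A,F)`
(Rehmann–Morita).  "The abelian group generated by symbols subject to relations" is
formalized as the abelianization of the corresponding presented group.
-/

variable (F : Type) [Field F]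

/-- Relators for `K₂(F)`: the Steinberg symbol relations (A1)-(A3).
(A3) `{u, 1-u} = 1` (for `u ≠ 1`) is encoded as: for units `u, w` with `(w : F) = 1 - u`
(which forces `u ≠ 1`), `{u, w}` is a relator. -/
def K2Rels : Set (FreeGroup (Fˣ × Fˣ)) :=
  {r | (∃ t u v : Fˣ, r = FreeGroup.of (t * u, v) * (FreeGroup.of (t, v) * FreeGroup.of (u, v))⁻¹) ∨
       (∃ t u v : Fˣ, r = FreeGroup.of (t, u * v) * (FreeGroup.of (t, u) * FreeGroup.of (t, v))⁻¹) ∨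
       (∃ u w : Fˣ, (w : F) = 1 - (u : F) ∧ r = FreeGroup.of (u, w))}

/-- `K₂(F)`: the abelian group generated by the symbols `{u,v}`, `u v ∈ Fˣ`,
subject to the Steinberg symbol relations (A1)-(A3). -/
def K2 : Type := Abelianization (PresentedGroup (K2Rels F))

noncomputable instance : CommGroup (K2 F) := inferInstanceAs (CommGroup (Abelianization _))

/-- The Steinberg symbol `{u,v}` in `K₂(F)`. -/
def K2.sym (u v : Fˣ) : K2 F := Abelianization.of (PresentedGroup.of (u, v))

/-- The subgroup `m·K₂(F)` of `m`-th powers of elements of `K₂(F)`. -/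
noncomputable def K2.powSubgroup (m : ℕ) : Subgroup (K2 F) := Subgroup.closure {x | ∃ y : K2 F, x = y ^ m}

/-- Relators for `K₂(2,F)`: the Steinberg cocycle relations (B1)-(B4). -/
def K2SLRels : Set (FreeGroup (Fˣ × Fˣ)) :=
  {r | (∃ t u v : Fˣ, r = FreeGroup.of (t, u) * FreeGroup.of (t * u, v) *
          (FreeGroup.of (t, u * v) * FreeGroup.of (u, v))⁻¹) ∨
       (r = FreeGroup.of ((1 : Fˣ), (1 : Fˣ))) ∨
       (∃ u v : Fˣ, r = FreeGroup.of (u, v) * (FreeGroup.of (u⁻¹, v⁻¹))⁻¹) ∨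
       (∃ u v w : Fˣ, (w : F) = 1 - (u : F) ∧
          r = FreeGroup.of (u, v) * (FreeGroup.of (u, w * v))⁻¹)}

/-- `K₂(2,F)`: the abelian group generated by the symbols `{u,v}`, `u v ∈ Fˣ`,
subject to the Steinberg cocycle relations (B1)-(B4). -/
def K2SL : Type := Abelianization (PresentedGroup (K2SLRels F))

noncomputable instance : CommGroup (K2SL F) := inferInstanceAs (CommGroup (Abelianization _))

/-- The Steinberg cocycle `{u,v}` in `K₂(2,F)`. -/
def K2SL.sym (u v : Fˣ) : K2SL F := Abelianization.of (PresentedGroup.of (u, v))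

/-- The subgroup `m⟨{u²,v}⟩` of `K₂(2,F)` generated by the elements `{u²,v}^m`, `u v ∈ Fˣ`. -/
noncomputable def K2SL.sqSubgroup (m : ℤ) : Subgroup (K2SL F) :=
  Subgroup.closure {x | ∃ u v : Fˣ, x = (K2SL.sym F (u ^ 2) v) ^ m}

/-- A generalized Cartan matrix: `a_{ii} = 2`, off-diagonal entries `≤ 0`,
and `a_{ij} = 0 ↔ a_{ji} = 0`. -/
def IsGCM {n : ℕ} (A : Matrix (Fin n) (Fin n) ℤ) : Prop :=
  (∀ i, A i i = 2) ∧ (∀ i j, i ≠ j → A i j ≤ 0) ∧ (∀ i j, A i j = 0 ↔ A j i = 0)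

/-- Relators for `K₂(A,F)`: the Rehmann–Morita relations (L1)-(L7). -/
def K2ARels {n : ℕ} (A : Matrix (Fin n) (Fin n) ℤ) : Set (FreeGroup (Fin n × Fˣ × Fˣ)) :=
  {r | (∃ (i : Fin n) (t u v : Fˣ),
          r = FreeGroup.of (i, t, u) * FreeGroup.of (i, t * u, v) *
              (FreeGroup.of (i, t, u * v) * FreeGroup.of (i, u, v))⁻¹) ∨
       (∃ i : Fin n, r = FreeGroup.of (i, 1, 1)) ∨
       (∃ (i : Fin n) (u v : Fˣ),
          r = FreeGroup.of (i, u, v) * (FreeGroup.of (i, u⁻¹, v⁻¹))⁻¹) ∨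
       (∃ (i : Fin n) (u v w : Fˣ), (w : F) = 1 - (u : F) ∧
          r = FreeGroup.of (i, u, v) * (FreeGroup.of (i, u, w * v))⁻¹) ∨
       (∃ (i j : Fin n) (u v : Fˣ), i ≠ j ∧
          r = FreeGroup.of (i, u, v ^ (A j i)) * (FreeGroup.of (j, u ^ (A i j), v))⁻¹) ∨
       (∃ (i j : Fin n) (t u v : Fˣ), i ≠ j ∧
          r = FreeGroup.of (i, t * u, v ^ (A j i)) *
              (FreeGroup.of (i, t, v ^ (A j i)) * FreeGroup.of (i, u, v ^ (A j i)))⁻¹) ∨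
       (∃ (i j : Fin n) (t u v : Fˣ), i ≠ j ∧
          r = FreeGroup.of (i, t ^ (A j i), u * v) *
              (FreeGroup.of (i, t ^ (A j i), u) * FreeGroup.of (i, t ^ (A j i), v))⁻¹)}

/-- `K₂(A,F)`: the abelian group generated by the symbols `c_i(u,v)` subject to (L1)-(L7). -/
def K2A {n : ℕ} (A : Matrix (Fin n) (Fin n) ℤ) : Type :=
  Abelianization (PresentedGroup (K2ARels F A))

noncomputable instance {n : ℕ} (A : Matrix (Fin n) (Fin n) ℤ) : CommGroup (K2A F A) :=
  inferInstanceAs (CommGroup (Abelianization _))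

/-- The generator `c_i(u,v)` of `K₂(A,F)`. -/
def K2A.c {n : ℕ} (A : Matrix (Fin n) (Fin n) ℤ) (i : Fin n) (u v : Fˣ) : K2A F A :=
  Abelianization.of (PresentedGroup.of (i, u, v))

open scoped Classical in
/-- `LGroup F p` is `K₂(F)` when `p` holds and `K₂(2,F)` otherwise.  Taking
`p = "the i-th column of A has an odd entry"` gives the factor `L_i`. -/
noncomputable def LGroup (p : Prop) : Type :=
  Abelianization (PresentedGroup (if p then K2Rels F else K2SLRels F))

noncomputable instance (p : Prop) : CommGroup (LGroup F p) :=
  inferInstanceAs (CommGroup (Abelianization _))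

/-- The symbol `{u,v}` (Steinberg symbol resp. cocycle) in `LGroup F p`. -/
noncomputable def LGroup.sym (p : Prop) (u v : Fˣ) : LGroup F p :=
  Abelianization.of (PresentedGroup.of (u, v))

/-- Relators `x_i^{a_{ji}} = x_j^{a_{ij}}` (`i < j`) for the auxiliary abelian group `G`. -/
def GRels {n : ℕ} (A : Matrix (Fin n) (Fin n) ℤ) : Set (FreeGroup (Fin n)) :=
  {r | ∃ i j : Fin n, i < j ∧ r = FreeGroup.of i ^ (A j i) * (FreeGroup.of j ^ (A i j))⁻¹}

/-- The abelian group `G = ⟨x_1,…,x_n ∣ x_i^{a_{ji}} = x_j^{a_{ij}}, [x_i,x_j] = 1⟩`. -/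
def GGroup {n : ℕ} (A : Matrix (Fin n) (Fin n) ℤ) : Type :=
  Abelianization (PresentedGroup (GRels A))

noncomputable instance {n : ℕ} (A : Matrix (Fin n) (Fin n) ℤ) : CommGroup (GGroup A) :=
  inferInstanceAs (CommGroup (Abelianization _))

namespace K2Aux

variable {F : Type} [Field F] {M : Type} [CommGroup M]

/-- Abstract Steinberg cocycle with values in a commutative group. -/
structure SC (F : Type) [Field F] {M : Type} [CommGroup M] (c : Fˣ → Fˣ → M) : Prop where
  b1 : ∀ t u v : Fˣ, c t u * c (t * u) v = c t (u * v) * c u v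
  b2 : c 1 1 = 1
  b3 : ∀ u v : Fˣ, c u v = c u⁻¹ v⁻¹
  b4 : ∀ u v w : Fˣ, (w : F) = 1 - (u : F) → c u v = c u (w * v)

namespace SC

variable {c : Fˣ → Fˣ → M} (h : SC F c)
include h

lemma one_left (v : Fˣ) : c 1 v = 1 := by
  have h1 := h.b1 1 1 v
  rw [one_mul, one_mul, h.b2, one_mul] at h1
  exact left_eq_mul.mp h1

lemma one_right (u : Fˣ) : c u 1 = 1 := by
  have h1 := h.b1 u 1 1
  rw [mul_one, one_mul, h.b2, mul_one] at h1
  exact mul_right_cancel (b := c u 1) (by rw [one_mul]; exact h1)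

lemma b3swap (u v : Fˣ) : c u⁻¹ v = c u v⁻¹ := by
  rw [h.b3 u⁻¹ v, inv_inv]

lemma d5 (x y : Fˣ) : c x (-x * y) = c x y := by
  by_cases hx : x = 1
  · subst hx; rw [h.one_left, h.one_left]
  · have hxF : (x : F) ≠ 1 := fun hh => hx (Units.ext hh)
    have hx0 : (x : F) ≠ 0 := x.ne_zero
    have h1 : (1 : F) - (x : F) ≠ 0 := sub_ne_zero.mpr (Ne.symm hxF)
    have h2 : (1 : F) - ((x : F))⁻¹ ≠ 0 := by
      rw [sub_ne_zero]
      intro hh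
      exact hxF (inv_eq_one.mp hh.symm)
    set w : Fˣ := Units.mk0 _ h1 with hw
    set w' : Fˣ := Units.mk0 _ h2 with hw'
    have e1 : c x y = c x⁻¹ y⁻¹ := h.b3 _ _
    have e2 : c x⁻¹ y⁻¹ = c x⁻¹ (w' * y⁻¹) := by
      refine h.b4 _ _ _ ?_
      simp [hw', Units.val_inv_eq_inv_val]
    have e3 : c x⁻¹ (w' * y⁻¹) = c x (w'⁻¹ * y) := by
      rw [h.b3swap x (w' * y⁻¹)]
      congr 1
      rw [mul_inv, inv_inv]
    have e4 : c x (w'⁻¹ * y) = c x (w * (w'⁻¹ * y)) := by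
      refine h.b4 _ _ _ ?_
      simp [hw]
    have e5 : w * w'⁻¹ = -x := by
      have e : (-(x : F)) * (1 - (x : F)⁻¹) = 1 - (x : F) := by
        rw [mul_sub, mul_one, neg_mul, mul_inv_cancel₀ hx0]; ring
      apply Units.ext
      rw [Units.val_mul, Units.val_inv_eq_inv_val, Units.val_neg]
      exact ((eq_mul_inv_iff_mul_eq₀ h2).mpr e).symm
    rw [← mul_assoc, e5] at e4
    rw [e1, e2, e3, e4]

lemma d2 (x : Fˣ) : c x (-x) = 1 := by
  have := h.d5 x 1
  rw [mul_one, h.one_right] at this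
  exact this

lemma d6 (x y : Fˣ) : c x (x ^ 2 * y) = c x y := by
  have e : (-x) * (-x * y) = x ^ 2 * y := by
    rw [← mul_assoc, neg_mul_neg, sq]
  calc c x (x ^ 2 * y) = c x (-x * (-x * y)) := by rw [e]
    _ = c x (-x * y) := h.d5 _ _
    _ = c x y := h.d5 _ _

lemma hxx (x : Fˣ) : c x x = c x x⁻¹ := by
  have := h.d6 x x⁻¹
  rw [sq, mul_assoc, mul_inv_cancel, mul_one] at this
  exact this

lemma hneg1 (x : Fˣ) : c x x⁻¹ = c x (-1) := by
  have := h.d5 x x⁻¹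
  rw [neg_mul, mul_inv_cancel] at this
  exact this.symm

lemma r1 (t v : Fˣ) : c t (t⁻¹ * v) * c t⁻¹ v = c t t⁻¹ := by
  have hb := h.b1 t t⁻¹ v
  rw [mul_inv_cancel, h.one_left, mul_one] at hb
  exact hb.symm

lemma key3 (x y : Fˣ) : c x (x * y) * c x y⁻¹ = c x x⁻¹ := by
  have r := h.r1 x (x ^ 2 * y)
  rw [show x⁻¹ * (x ^ 2 * y) = x * y by group] at r
  rw [h.b3swap x (x ^ 2 * y)] at r
  have e : c x ((x ^ 2 * y)⁻¹) = c x y⁻¹ := by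
    have := h.d6 x ((x ^ 2 * y)⁻¹)
    rw [show x ^ 2 * (x ^ 2 * y)⁻¹ = y⁻¹ by rw [mul_inv, mul_inv_cancel_left]] at this
    exact this.symm
  rw [e] at r
  exact r

lemma key1 (x y : Fˣ) : c (x ^ 2) y * c x y⁻¹ = c x y := by
  have b := h.b1 x x y
  rw [← sq, h.hxx] at b
  have k := h.key3 x y
  apply mul_left_cancel (a := c x x⁻¹)
  calc c x x⁻¹ * (c (x ^ 2) y * c x y⁻¹)
      = (c x x⁻¹ * c (x ^ 2) y) * c x y⁻¹ := by rw [mul_assoc]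
    _ = (c x (x * y) * c x y) * c x y⁻¹ := by rw [b]
    _ = (c x (x * y) * c x y⁻¹) * c x y := by rw [mul_assoc, mul_assoc, mul_comm (c x y)]
    _ = c x x⁻¹ * c x y := by rw [k]

lemma key2 (x y : Fˣ) : c x (y ^ 2) * c y x = c x y := by
  have b := h.b1 x y (-(x * y))
  rw [h.d2 (x * y), mul_one] at b
  rw [show y * -(x * y) = -x * y ^ 2 by rw [mul_neg, neg_mul, sq, mul_left_comm], h.d5] at b
  rw [show -(x * y) = -y * x by rw [neg_mul, mul_comm], h.d5] at b
  exact b.symm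

lemma sym (x y : Fˣ) :
    c x y * c y x * c (x * y) (x * y)⁻¹ = c x x⁻¹ * c y y⁻¹ := by
  have b := h.b1 x y (x * y)⁻¹
  rw [show y * (x * y)⁻¹ = x⁻¹ by rw [mul_inv, mul_left_comm, mul_inv_cancel, mul_one]] at b
  have k := h.key3 y⁻¹ (y * (x * y))
  rw [inv_mul_cancel_left] at k
  rw [h.b3swap y ((y * (x * y))⁻¹), inv_inv] at k
  rw [show y * (x * y) = y ^ 2 * x by rw [sq]; ac_rfl, h.d6] at k
  rw [← h.b3 y y⁻¹] at k
  rw [← h.b3swap y (x * y)] at b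
  calc c x y * c y x * c (x * y) (x * y)⁻¹
      = (c x y * c (x * y) (x * y)⁻¹) * c y x := by rw [mul_right_comm]
    _ = (c x x⁻¹ * c y⁻¹ (x * y)) * c y x := by rw [b]
    _ = c x x⁻¹ * (c y⁻¹ (x * y) * c y x) := by rw [mul_assoc]
    _ = c x x⁻¹ * c y y⁻¹ := by rw [k]

lemma negone_inv : ((-1 : Fˣ))⁻¹ = -1 := by
  apply Units.ext
  simp [Units.val_inv_eq_inv_val, inv_neg]

lemma neg_inv' (y : Fˣ) : (-y)⁻¹ = -(y⁻¹) := by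
  apply Units.ext
  rw [Units.val_inv_eq_inv_val]
  simp [inv_neg]

lemma hsq (x : Fˣ) : c (x ^ 2) (-1) = 1 := by
  have k := h.key1 x (-1)
  rw [h.negone_inv] at k
  exact mul_right_cancel (b := c x (-1)) (by rw [one_mul]; exact k)

lemma negy (x y : Fˣ) : c x (-y) * c x y⁻¹ = c x x⁻¹ := by
  have e : c x (-y) = c x (x⁻¹ * y) := by
    have := h.d5 x (x⁻¹ * y)
    rw [show -x * (x⁻¹ * y) = -y by rw [neg_mul, mul_inv_cancel_left]] at this
    exact this
  have r := h.r1 x y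
  rw [h.b3swap x y] at r
  rw [e]
  exact r

lemma csq_neg (x y : Fˣ) : c (x ^ 2) (-y) = c (x ^ 2) y := by
  have k1 := h.key1 x (-y)
  rw [h.neg_inv'] at k1
  have n1 := h.negy x y
  have n2 := h.negy x y⁻¹
  rw [inv_inv] at n2
  have k2 := h.key1 x y
  apply mul_right_cancel (b := c x (-(y⁻¹)) * c x y⁻¹)
  calc c (x ^ 2) (-y) * (c x (-(y⁻¹)) * c x y⁻¹)
      = (c (x ^ 2) (-y) * c x (-(y⁻¹))) * c x y⁻¹ := by rw [mul_assoc]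
    _ = c x (-y) * c x y⁻¹ := by rw [k1]
    _ = c x x⁻¹ := n1
    _ = c x (-(y⁻¹)) * c x y := n2.symm
    _ = (c (x ^ 2) y * c x y⁻¹) * c x (-(y⁻¹)) := by rw [k2, mul_comm]
    _ = c (x ^ 2) y * (c x (-(y⁻¹)) * c x y⁻¹) := by rw [mul_right_comm, mul_assoc]

lemma hsqmul (x y : Fˣ) : c (x ^ 2 * y) (-1) = c y (-1) := by
  have b := h.b1 (x ^ 2) y (-1)
  rw [mul_neg_one, h.csq_neg] at b
  exact mul_left_cancel b

lemma sqswap (x y : Fˣ) : c (x ^ 2) y * c y (x ^ 2) = 1 := by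
  have s := h.sym (x ^ 2) y
  rw [h.hneg1 (x ^ 2 * y), h.hsqmul x y, ← h.hneg1 y] at s
  rw [h.hneg1 (x ^ 2), h.hsq] at s
  exact mul_right_cancel (b := c y y⁻¹) s

lemma csq (x y : Fˣ) : c (x ^ 2) y * c y x = c x y := by
  have s := h.sqswap x y
  have k := h.key2 y x
  rw [eq_inv_of_mul_eq_one_left s, inv_mul_eq_iff_eq_mul]
  exact k.symm

lemma sq_sq (x y : Fˣ) : c (x ^ 2) y = c x (y ^ 2) :=
  mul_right_cancel ((h.csq x y).trans (h.key2 x y).symm)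

lemma mul_sq (t u y : Fˣ) : c (t * u) (y ^ 2) = c t (y ^ 2) * c u (y ^ 2) := by
  have e1 := h.b1 t u y
  have e2 := h.b1 y t u
  rw [mul_comm y t] at e2
  have e3 := h.b1 t y u
  rw [mul_comm y u] at e3
  have k2 := h.key2 u y
  apply mul_right_cancel (b := c y (t * u))
  rw [h.key2 (t * u) y]
  symm
  have e2' : c y (t * u) = c y t * c (t * y) u * (c t u)⁻¹ := by
    rw [eq_mul_inv_iff_mul_eq]
    exact e2.symm
  calc (c t (y ^ 2) * c u (y ^ 2)) * c y (t * u)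
      = c t (y ^ 2) * c u (y ^ 2) * (c y t * c (t * y) u * (c t u)⁻¹) := by rw [e2']
    _ = (c t (y ^ 2) * c y t) * (c (t * y) u * c u (y ^ 2)) * (c t u)⁻¹ := by ac_rfl
    _ = c t y * (c (t * y) u * c u (y ^ 2)) * (c t u)⁻¹ := by rw [h.key2 t y]
    _ = (c t y * c (t * y) u) * c u (y ^ 2) * (c t u)⁻¹ := by ac_rfl
    _ = (c t (u * y) * c y u) * c u (y ^ 2) * (c t u)⁻¹ := by rw [e3]
    _ = c t (u * y) * (c u (y ^ 2) * c y u) * (c t u)⁻¹ := by ac_rfl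
    _ = c t (u * y) * c u y * (c t u)⁻¹ := by rw [k2]
    _ = (c t u * c (t * u) y) * (c t u)⁻¹ := by rw [← e1]
    _ = c (t * u) y := by rw [mul_comm (c t u), mul_inv_cancel_right]

lemma sq_mul (x u v : Fˣ) : c (x ^ 2) (u * v) = c (x ^ 2) u * c (x ^ 2) v := by
  have e1 := h.b1 x u v
  have e2 := h.b1 u v x
  have e3 := h.b1 u x v
  rw [mul_comm x v] at e3
  apply mul_right_cancel (b := c (u * v) x)
  rw [h.csq x (u * v)]
  symm
  have e2' : c (u * v) x = c u (v * x) * c v x * (c u v)⁻¹ := by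
    rw [eq_mul_inv_iff_mul_eq, mul_comm]
    exact e2
  calc (c (x ^ 2) u * c (x ^ 2) v) * c (u * v) x
      = c (x ^ 2) u * c (x ^ 2) v * (c u (v * x) * c v x * (c u v)⁻¹) := by rw [e2']
    _ = c (x ^ 2) u * ((c (x ^ 2) v * c v x) * c u (v * x)) * (c u v)⁻¹ := by ac_rfl
    _ = c (x ^ 2) u * (c x v * c u (v * x)) * (c u v)⁻¹ := by rw [h.csq x v]
    _ = c (x ^ 2) u * (c u (v * x) * c x v) * (c u v)⁻¹ := by rw [mul_comm (c x v)]
    _ = c (x ^ 2) u * (c u x * c (u * x) v) * (c u v)⁻¹ := by rw [← e3]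
    _ = ((c (x ^ 2) u * c u x) * c (u * x) v) * (c u v)⁻¹ := by ac_rfl
    _ = (c x u * c (u * x) v) * (c u v)⁻¹ := by rw [h.csq x u]
    _ = (c x u * c (x * u) v) * (c u v)⁻¹ := by rw [mul_comm u x]
    _ = (c x (u * v) * c u v) * (c u v)⁻¹ := by rw [e1]
    _ = c x (u * v) := mul_inv_cancel_right _ _

lemma sq1' (u v : Fˣ) : c u ((v⁻¹) ^ 2) = c ((u⁻¹) ^ 2) v := by
  rw [h.sq_sq u⁻¹ v, h.b3swap u (v ^ 2), inv_pow]

end SC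


section Instantiation

variable {F : Type} [Field F]

lemma rel_eq_one {α : Type*} (rels : Set (FreeGroup α)) {r : FreeGroup α} (hr : r ∈ rels) :
    PresentedGroup.mk rels r = 1 :=
  (QuotientGroup.eq_one_iff r).mpr (Subgroup.subset_normalClosure hr)

lemma abel_rel_eq_one {α : Type*} (rels : Set (FreeGroup α)) {r : FreeGroup α} (hr : r ∈ rels) :
    Abelianization.of (PresentedGroup.mk rels r) = 1 := by
  rw [rel_eq_one rels hr, map_one]

lemma sc_K2SL : SC F (K2SL.sym F) := by
  constructor
  · intro t u v
    have h := abel_rel_eq_one (K2SLRels F) (Or.inl ⟨t, u, v, rfl⟩)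
    simp only [map_mul, map_inv] at h
    exact mul_inv_eq_one.mp h
  · exact abel_rel_eq_one (K2SLRels F) (Or.inr (Or.inl rfl))
  · intro u v
    have h := abel_rel_eq_one (K2SLRels F) (Or.inr (Or.inr (Or.inl ⟨u, v, rfl⟩)))
    simp only [map_mul, map_inv] at h
    exact mul_inv_eq_one.mp h
  · intro u v w hw
    have h := abel_rel_eq_one (K2SLRels F) (Or.inr (Or.inr (Or.inr ⟨u, v, w, hw, rfl⟩)))
    simp only [map_mul, map_inv] at h
    exact mul_inv_eq_one.mp h

lemma sc_K2A (A : Matrix (Fin 3) (Fin 3) ℤ) (i : Fin 3) : SC F (K2A.c F A i) := by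
  constructor
  · intro t u v
    have h := abel_rel_eq_one (K2ARels F A) (Or.inl ⟨i, t, u, v, rfl⟩)
    simp only [map_mul, map_inv] at h
    exact mul_inv_eq_one.mp h
  · exact abel_rel_eq_one (K2ARels F A) (Or.inr (Or.inl ⟨i, rfl⟩))
  · intro u v
    have h := abel_rel_eq_one (K2ARels F A) (Or.inr (Or.inr (Or.inl ⟨i, u, v, rfl⟩)))
    simp only [map_mul, map_inv] at h
    exact mul_inv_eq_one.mp h
  · intro u v w hw
    have h := abel_rel_eq_one (K2ARels F A)
      (Or.inr (Or.inr (Or.inr (Or.inl ⟨i, u, v, w, hw, rfl⟩))))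
    simp only [map_mul, map_inv] at h
    exact mul_inv_eq_one.mp h

lemma cL5 (A : Matrix (Fin 3) (Fin 3) ℤ) {i j : Fin 3} (hij : i ≠ j) (u v : Fˣ) :
    K2A.c F A i u (v ^ (A j i)) = K2A.c F A j (u ^ (A i j)) v := by
  have h := abel_rel_eq_one (K2ARels F A)
    (Or.inr (Or.inr (Or.inr (Or.inr (Or.inl ⟨i, j, u, v, hij, rfl⟩)))))
  simp only [map_mul, map_inv] at h
  exact mul_inv_eq_one.mp h

lemma zp2 (v : Fˣ) : v ^ (-2 : ℤ) = (v⁻¹) ^ 2 := by group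

lemma zp2' (v : Fˣ) : (v⁻¹) ^ (-2 : ℤ) = v ^ 2 := by group

lemma mem_sq (u v : Fˣ) : K2SL.sym F (u ^ 2) v ∈ K2SL.sqSubgroup F 1 :=
  Subgroup.subset_closure ⟨u, v, (zpow_one _).symm⟩

lemma mem_sq' (u v : Fˣ) : K2SL.sym F u (v ^ (-2 : ℤ)) ∈ K2SL.sqSubgroup F 1 := by
  rw [zp2, (sc_K2SL (F := F)).sq1' u v]
  exact mem_sq u⁻¹ v

lemma mem_sq'' (u v : Fˣ) : K2SL.sym F (u ^ (-2 : ℤ)) v ∈ K2SL.sqSubgroup F 1 := by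
  rw [zp2]
  exact mem_sq u⁻¹ v

/-- The common key identity: `c_i(u², v) = c_j(u², v)` whenever `a_ij = a_ji = -2`. -/
lemma keyc (A : Matrix (Fin 3) (Fin 3) ℤ) {i j : Fin 3} (hij : i ≠ j)
    (hji2 : A j i = -2) (hij2 : A i j = -2) (u v : Fˣ) :
    K2A.c F A i (u ^ 2) v = K2A.c F A j (u ^ 2) v := by
  have l5 := cL5 A hij u v⁻¹
  rw [hji2, hij2] at l5
  calc K2A.c F A i (u ^ 2) v = K2A.c F A i u (v ^ 2) := (sc_K2A A i).sq_sq u v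
    _ = K2A.c F A i u (v⁻¹ ^ (-2 : ℤ)) := by rw [zp2']
    _ = K2A.c F A j (u ^ (-2 : ℤ)) v⁻¹ := l5
    _ = K2A.c F A j ((u⁻¹) ^ 2) v⁻¹ := by rw [zp2]
    _ = K2A.c F A j u⁻¹ ((v⁻¹) ^ 2) := (sc_K2A A j).sq_sq u⁻¹ v⁻¹
    _ = K2A.c F A j u (((v⁻¹) ^ 2)⁻¹) := (sc_K2A A j).b3swap u ((v⁻¹) ^ 2)
    _ = K2A.c F A j u (v ^ 2) := by rw [inv_pow, inv_inv]
    _ = K2A.c F A j (u ^ 2) v := ((sc_K2A A j).sq_sq u v).symm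

end Instantiation

section Construction

variable {F : Type} [Field F]

/-- abbreviation for the target group. -/
abbrev QN (F : Type) [Field F] : Type := K2SL F ⧸ K2SL.sqSubgroup F 1

abbrev TT (F : Type) [Field F] : Type := K2SL F × QN F × QN F

/-- second-component projection homs -/
noncomputable def p2 (i : Fin 3) : K2SL F →* QN F :=
  if i = 0 then 1 else QuotientGroup.mk' _

noncomputable def p3 (i : Fin 3) : K2SL F →* QN F :=
  if i = 2 then QuotientGroup.mk' _ else 1

lemma p2_memN (i : Fin 3) {x : K2SL F} (hx : x ∈ K2SL.sqSubgroup F 1) : p2 i x = 1 := by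
  unfold p2
  split
  · rfl
  · exact (QuotientGroup.eq_one_iff x).mpr hx

lemma p3_memN (i : Fin 3) {x : K2SL F} (hx : x ∈ K2SL.sqSubgroup F 1) : p3 i x = 1 := by
  unfold p3
  split
  · exact (QuotientGroup.eq_one_iff x).mpr hx
  · rfl

noncomputable def fgen (x : Fin 3 × Fˣ × Fˣ) : TT F :=
  (K2SL.sym F x.2.1 x.2.2, p2 x.1 (K2SL.sym F x.2.1 x.2.2), p3 x.1 (K2SL.sym F x.2.1 x.2.2))

lemma SC.comp {M N : Type} [CommGroup M] [CommGroup N] {c : Fˣ → Fˣ → M}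
    (hc : SC F c) (f : M →* N) : SC F (fun u v => f (c u v)) := by
  constructor
  · intro t u v
    rw [← map_mul, ← map_mul, hc.b1]
  · rw [hc.b2, map_one]
  · intro u v
    rw [hc.b3]
  · intro u v w hw
    rw [hc.b4 u v w hw]

lemma sc_fgen (i : Fin 3) : SC F (fun u v => fgen (i, u, v)) := by
  have h1 := sc_K2SL (F := F)
  have h2 := h1.comp (p2 i)
  have h3 := h1.comp (p3 i)
  constructor
  · intro t u v
    exact Prod.ext (h1.b1 t u v) (Prod.ext (h2.b1 t u v) (h3.b1 t u v))
  · exact Prod.ext h1.b2 (Prod.ext h2.b2 h3.b2)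
  · intro u v
    exact Prod.ext (h1.b3 u v) (Prod.ext (h2.b3 u v) (h3.b3 u v))
  · intro u v w hw
    exact Prod.ext (h1.b4 u v w hw) (Prod.ext (h2.b4 u v w hw) (h3.b4 u v w hw))

lemma lift_fgen_rel (A : Matrix (Fin 3) (Fin 3) ℤ)
    (hsym : ∀ i j, A i j = A j i)
    (hoff : ∀ i j, i ≠ j → A i j = -2 ∨ A i j = 0) :
    ∀ r ∈ K2ARels F A, FreeGroup.lift (fgen (F := F)) r = 1 := by
  intro r hr
  obtain ⟨i,t,u,v,rfl⟩ | ⟨i,rfl⟩ | ⟨i,u,v,rfl⟩ | ⟨i,u,v,w,hw,rfl⟩ |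
    ⟨i,j,u,v,hij,rfl⟩ | ⟨i,j,t,u,v,hij,rfl⟩ | ⟨i,j,t,u,v,hij,rfl⟩ := hr
  · simp only [map_mul, map_inv, FreeGroup.lift_apply_of, mul_inv_eq_one]
    exact (sc_fgen i).b1 t u v
  · simp only [FreeGroup.lift_apply_of]
    exact (sc_fgen i).b2
  · simp only [map_mul, map_inv, FreeGroup.lift_apply_of, mul_inv_eq_one]
    exact (sc_fgen i).b3 u v
  · simp only [map_mul, map_inv, FreeGroup.lift_apply_of, mul_inv_eq_one]
    exact (sc_fgen i).b4 u v w hw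
  · -- L5
    simp only [map_mul, map_inv, FreeGroup.lift_apply_of, mul_inv_eq_one]
    rw [hsym i j]
    rcases hoff j i (Ne.symm hij) with ha | ha <;> rw [ha]
    · refine Prod.ext ?_ (Prod.ext ?_ ?_)
      · show K2SL.sym F u (v ^ (-2:ℤ)) = K2SL.sym F (u ^ (-2:ℤ)) v
        rw [zp2, zp2]
        exact sc_K2SL.sq1' u v
      · show p2 i (K2SL.sym F u (v ^ (-2:ℤ))) = p2 j (K2SL.sym F (u ^ (-2:ℤ)) v)
        by_cases hi : i = 0 <;> by_cases hj : j = 0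
        · exact absurd (hi.trans hj.symm) hij
        · rw [hi]
          show (1 : QN F) = _
          rw [p2, if_neg hj]
          exact ((QuotientGroup.eq_one_iff _).mpr (mem_sq'' u v)).symm
        · rw [hj]
          show _ = (1 : QN F)
          rw [p2, if_neg hi]
          exact (QuotientGroup.eq_one_iff _).mpr (mem_sq' u v)
        · rw [p2, if_neg hi, p2, if_neg hj]
          exact congrArg _ (by rw [zp2, zp2]; exact sc_K2SL.sq1' u v)
      · show p3 i (K2SL.sym F u (v ^ (-2:ℤ))) = p3 j (K2SL.sym F (u ^ (-2:ℤ)) v)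
        by_cases hi : i = 2 <;> by_cases hj : j = 2
        · exact absurd (hi.trans hj.symm) hij
        · rw [hi]
          show QuotientGroup.mk' _ _ = p3 j _
          rw [p3, if_neg hj]
          show _ = (1 : QN F)
          exact (QuotientGroup.eq_one_iff _).mpr (mem_sq' u v)
        · rw [hj]
          show p3 i _ = QuotientGroup.mk' _ _
          rw [p3, if_neg hi]
          show (1 : QN F) = _
          exact ((QuotientGroup.eq_one_iff _).mpr (mem_sq'' u v)).symm
        · rw [p3, if_neg hi, p3, if_neg hj]
          exact congrArg _ (by rw [zp2, zp2]; exact sc_K2SL.sq1' u v)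
    · rw [zpow_zero, zpow_zero]
      refine Prod.ext ?_ (Prod.ext ?_ ?_)
      · show K2SL.sym F u 1 = K2SL.sym F 1 v
        rw [sc_K2SL.one_right, sc_K2SL.one_left]
      · show p2 i (K2SL.sym F u 1) = p2 j (K2SL.sym F 1 v)
        rw [sc_K2SL.one_right, sc_K2SL.one_left, map_one, map_one]
      · show p3 i (K2SL.sym F u 1) = p3 j (K2SL.sym F 1 v)
        rw [sc_K2SL.one_right, sc_K2SL.one_left, map_one, map_one]
  · -- L6
    simp only [map_mul, map_inv, FreeGroup.lift_apply_of, mul_inv_eq_one]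
    rcases hoff j i (Ne.symm hij) with ha | ha <;> rw [ha]
    · have e : K2SL.sym F (t * u) (v ^ (-2:ℤ)) =
          K2SL.sym F t (v ^ (-2:ℤ)) * K2SL.sym F u (v ^ (-2:ℤ)) := by
        rw [zp2]
        exact sc_K2SL.mul_sq t u v⁻¹
      refine Prod.ext e (Prod.ext ?_ ?_)
      · show p2 i (K2SL.sym F (t * u) (v ^ (-2:ℤ))) =
          p2 i (K2SL.sym F t (v ^ (-2:ℤ))) * p2 i (K2SL.sym F u (v ^ (-2:ℤ)))
        rw [e, map_mul]
      · show p3 i (K2SL.sym F (t * u) (v ^ (-2:ℤ))) =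
          p3 i (K2SL.sym F t (v ^ (-2:ℤ))) * p3 i (K2SL.sym F u (v ^ (-2:ℤ)))
        rw [e, map_mul]
    · rw [zpow_zero]
      have e : K2SL.sym F (t * u) 1 = K2SL.sym F t 1 * K2SL.sym F u 1 := by
        rw [sc_K2SL.one_right, sc_K2SL.one_right, sc_K2SL.one_right, one_mul]
      refine Prod.ext e (Prod.ext ?_ ?_)
      · show p2 i (K2SL.sym F (t * u) 1) = p2 i (K2SL.sym F t 1) * p2 i (K2SL.sym F u 1)
        rw [e, map_mul]
      · show p3 i (K2SL.sym F (t * u) 1) = p3 i (K2SL.sym F t 1) * p3 i (K2SL.sym F u 1)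
        rw [e, map_mul]
  · -- L7
    simp only [map_mul, map_inv, FreeGroup.lift_apply_of, mul_inv_eq_one]
    rcases hoff j i (Ne.symm hij) with ha | ha <;> rw [ha]
    · have e : K2SL.sym F (t ^ (-2:ℤ)) (u * v) =
          K2SL.sym F (t ^ (-2:ℤ)) u * K2SL.sym F (t ^ (-2:ℤ)) v := by
        rw [zp2]
        exact sc_K2SL.sq_mul t⁻¹ u v
      refine Prod.ext e (Prod.ext ?_ ?_)
      · show p2 i (K2SL.sym F (t ^ (-2:ℤ)) (u * v)) =
          p2 i (K2SL.sym F (t ^ (-2:ℤ)) u) * p2 i (K2SL.sym F (t ^ (-2:ℤ)) v)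
        rw [e, map_mul]
      · show p3 i (K2SL.sym F (t ^ (-2:ℤ)) (u * v)) =
          p3 i (K2SL.sym F (t ^ (-2:ℤ)) u) * p3 i (K2SL.sym F (t ^ (-2:ℤ)) v)
        rw [e, map_mul]
    · rw [zpow_zero]
      have e : K2SL.sym F (1 : Fˣ) (u * v) = K2SL.sym F 1 u * K2SL.sym F 1 v := by
        rw [sc_K2SL.one_left, sc_K2SL.one_left, sc_K2SL.one_left, one_mul]
      refine Prod.ext e (Prod.ext ?_ ?_)
      · show p2 i (K2SL.sym F (1:Fˣ) (u * v)) =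
          p2 i (K2SL.sym F 1 u) * p2 i (K2SL.sym F 1 v)
        rw [e, map_mul]
      · show p3 i (K2SL.sym F (1:Fˣ) (u * v)) =
          p3 i (K2SL.sym F 1 u) * p3 i (K2SL.sym F 1 v)
        rw [e, map_mul]

end Construction

section Psi

variable {F : Type} [Field F]

lemma lift_sc_rel {M : Type} [CommGroup M] {c : Fˣ → Fˣ → M} (hc : SC F c) :
    ∀ r ∈ K2SLRels F, FreeGroup.lift (fun x : Fˣ × Fˣ => c x.1 x.2) r = 1 := by
  intro r hr
  obtain ⟨t,u,v,rfl⟩ | rfl | ⟨u,v,rfl⟩ | ⟨u,v,w,hw,rfl⟩ := hr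
  · simp only [map_mul, map_inv, FreeGroup.lift_apply_of, mul_inv_eq_one]
    exact hc.b1 t u v
  · simp only [FreeGroup.lift_apply_of]
    exact hc.b2
  · simp only [map_mul, map_inv, FreeGroup.lift_apply_of, mul_inv_eq_one]
    exact hc.b3 u v
  · simp only [map_mul, map_inv, FreeGroup.lift_apply_of, mul_inv_eq_one]
    exact hc.b4 u v w hw

lemma SC.div {M : Type} [CommGroup M] {c d : Fˣ → Fˣ → M} (hc : SC F c) (hd : SC F d) :
    SC F (fun u v => c u v * (d u v)⁻¹) := by
  constructor
  · intro t u v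
    have h1 := hc.b1 t u v
    have h2 := hd.b1 t u v
    calc (c t u * (d t u)⁻¹) * (c (t*u) v * (d (t*u) v)⁻¹)
        = (c t u * c (t*u) v) * (d t u * d (t*u) v)⁻¹ := by rw [mul_inv]; ac_rfl
      _ = (c t (u*v) * c u v) * (d t (u*v) * d u v)⁻¹ := by rw [h1, h2]
      _ = (c t (u*v) * (d t (u*v))⁻¹) * (c u v * (d u v)⁻¹) := by rw [mul_inv]; ac_rfl
  · rw [hc.b2, hd.b2, inv_one, mul_one]
  · intro u v
    rw [hc.b3, hd.b3]
  · intro u v w hw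
    rw [hc.b4 u v w hw, hd.b4 u v w hw]

noncomputable def symLift {M : Type} [CommGroup M] {c : Fˣ → Fˣ → M} (hc : SC F c) :
    K2SL F →* M :=
  Abelianization.lift (PresentedGroup.toGroup (lift_sc_rel hc))

lemma symLift_sym {M : Type} [CommGroup M] {c : Fˣ → Fˣ → M} (hc : SC F c) (u v : Fˣ) :
    symLift hc (K2SL.sym F u v) = c u v := by
  show Abelianization.lift _ (Abelianization.of (PresentedGroup.of (u,v))) = _
  rw [Abelianization.lift_apply_of, PresentedGroup.toGroup.of]

lemma K2SL_hom_ext {M : Type} [CommGroup M] {f g : K2SL F →* M}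
    (hfg : ∀ u v, f (K2SL.sym F u v) = g (K2SL.sym F u v)) : f = g := by
  apply Abelianization.hom_ext
  apply PresentedGroup.ext
  intro x
  exact hfg x.1 x.2

lemma K2A_hom_ext {A : Matrix (Fin 3) (Fin 3) ℤ} {M : Type} [CommGroup M]
    {f g : K2A F A →* M}
    (hfg : ∀ i u v, f (K2A.c F A i u v) = g (K2A.c F A i u v)) : f = g := by
  apply Abelianization.hom_ext
  apply PresentedGroup.ext
  intro x
  exact hfg x.1 x.2.1 x.2.2

lemma QN_hom_ext {M : Type} [CommGroup M] {f g : QN F →* M}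
    (hfg : ∀ u v, f (QuotientGroup.mk (K2SL.sym F u v)) = g (QuotientGroup.mk (K2SL.sym F u v))) :
    f = g := by
  apply QuotientGroup.monoidHom_ext
  exact K2SL_hom_ext hfg

lemma p2_0 : p2 (F := F) 0 = 1 := by unfold p2; exact if_pos rfl
lemma p2_1 : p2 (F := F) 1 = QuotientGroup.mk' _ := by unfold p2; exact if_neg (by decide)
lemma p2_2 : p2 (F := F) 2 = QuotientGroup.mk' _ := by unfold p2; exact if_neg (by decide)
lemma p3_0 : p3 (F := F) 0 = 1 := by unfold p3; exact if_neg (by decide)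
lemma p3_1 : p3 (F := F) 1 = 1 := by unfold p3; exact if_neg (by decide)
lemma p3_2 : p3 (F := F) 2 = QuotientGroup.mk' _ := by unfold p3; exact if_pos rfl

lemma main (A : Matrix (Fin 3) (Fin 3) ℤ)
    (hsym : ∀ i j, A i j = A j i)
    (hoff : ∀ i j, i ≠ j → A i j = -2 ∨ A i j = 0)
    (h01 : A 0 1 = -2) (h12 : A 1 2 = -2) :
    Nonempty (K2A F A ≃*
      (K2SL F × (K2SL F ⧸ K2SL.sqSubgroup F 1) × (K2SL F ⧸ K2SL.sqSubgroup F 1))) := by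
  have h10 : A 1 0 = -2 := (hsym 1 0).trans h01
  have h21 : A 2 1 = -2 := (hsym 2 1).trans h12
  -- the map φ : K₂(A,F) → K₂(2,F) × Q × Q
  let φ : K2A F A →* TT F :=
    Abelianization.lift (PresentedGroup.toGroup (lift_fgen_rel A hsym hoff))
  have φc : ∀ i u v, φ (K2A.c F A i u v) = fgen (i, u, v) := by
    intro i u v
    show Abelianization.lift _ (Abelianization.of (PresentedGroup.of (i,u,v))) = _
    rw [Abelianization.lift_apply_of, PresentedGroup.toGroup.of]
  -- the components of ψ
  let α : K2SL F →* K2A F A := symLift (sc_K2A A 0)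
  let δ1 : K2SL F →* K2A F A := symLift ((sc_K2A A 1).div (sc_K2A A 0))
  let δ2 : K2SL F →* K2A F A := symLift ((sc_K2A A 2).div (sc_K2A A 1))
  have hδ1 : ∀ u v, δ1 (K2SL.sym F u v) = K2A.c F A 1 u v * (K2A.c F A 0 u v)⁻¹ :=
    fun u v => symLift_sym _ u v
  have hδ2 : ∀ u v, δ2 (K2SL.sym F u v) = K2A.c F A 2 u v * (K2A.c F A 1 u v)⁻¹ :=
    fun u v => symLift_sym _ u v
  have hker1 : K2SL.sqSubgroup F 1 ≤ δ1.ker := by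
    refine (Subgroup.closure_le _).mpr ?_
    rintro x ⟨u, v, rfl⟩
    rw [SetLike.mem_coe, MonoidHom.mem_ker, zpow_one, hδ1,
      keyc A (show (1 : Fin 3) ≠ 0 by decide) h01 h10 u v, mul_inv_cancel]
  have hker2 : K2SL.sqSubgroup F 1 ≤ δ2.ker := by
    refine (Subgroup.closure_le _).mpr ?_
    rintro x ⟨u, v, rfl⟩
    rw [SetLike.mem_coe, MonoidHom.mem_ker, zpow_one, hδ2,
      keyc A (show (2 : Fin 3) ≠ 1 by decide) h12 h21 u v, mul_inv_cancel]
  let β : QN F →* K2A F A := QuotientGroup.lift _ δ1 hker1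
  let γ : QN F →* K2A F A := QuotientGroup.lift _ δ2 hker2
  have βmk : ∀ x : K2SL F, β (QuotientGroup.mk x) = δ1 x := fun x => rfl
  have γmk : ∀ x : K2SL F, γ (QuotientGroup.mk x) = δ2 x := fun x => rfl
  let ψ : TT F →* K2A F A :=
    ((α.comp (MonoidHom.fst _ _)) *
      (β.comp ((MonoidHom.fst _ _).comp (MonoidHom.snd _ _)))) *
      (γ.comp ((MonoidHom.snd _ _).comp (MonoidHom.snd _ _)))
  have ψap : ∀ x : TT F, ψ x = α x.1 * β x.2.1 * γ x.2.2 := fun x => rfl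
  -- ψ ∘ φ = id
  have h1 : ψ.comp φ = MonoidHom.id (K2A F A) := by
    apply K2A_hom_ext
    intro i u v
    rw [MonoidHom.comp_apply, MonoidHom.id_apply, φc]
    fin_cases i
    · show ψ (K2SL.sym F u v, p2 0 (K2SL.sym F u v), p3 0 (K2SL.sym F u v)) = K2A.c F A 0 u v
      rw [ψap]
      show α (K2SL.sym F u v) * β (p2 0 (K2SL.sym F u v)) * γ (p3 0 (K2SL.sym F u v)) = _
      rw [p2_0, p3_0, MonoidHom.one_apply, map_one, map_one, mul_one, mul_one]
      exact symLift_sym _ u v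
    · show ψ (K2SL.sym F u v, p2 1 (K2SL.sym F u v), p3 1 (K2SL.sym F u v)) = K2A.c F A 1 u v
      rw [ψap]
      show α (K2SL.sym F u v) * β (p2 1 (K2SL.sym F u v)) * γ (p3 1 (K2SL.sym F u v)) = _
      rw [p2_1, p3_1, MonoidHom.one_apply, map_one, mul_one, QuotientGroup.mk'_apply,
        βmk, hδ1, symLift_sym]
      rw [mul_comm, inv_mul_cancel_right]
    · show ψ (K2SL.sym F u v, p2 2 (K2SL.sym F u v), p3 2 (K2SL.sym F u v)) = K2A.c F A 2 u v
      rw [ψap]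
      show α (K2SL.sym F u v) * β (p2 2 (K2SL.sym F u v)) * γ (p3 2 (K2SL.sym F u v)) = _
      rw [p2_2, p3_2, QuotientGroup.mk'_apply, βmk, γmk, hδ1, hδ2, symLift_sym]
      calc K2A.c F A 0 u v * (K2A.c F A 1 u v * (K2A.c F A 0 u v)⁻¹) *
            (K2A.c F A 2 u v * (K2A.c F A 1 u v)⁻¹)
          = (K2A.c F A 0 u v * (K2A.c F A 0 u v)⁻¹) *
            (K2A.c F A 1 u v * (K2A.c F A 1 u v)⁻¹) * K2A.c F A 2 u v := by ac_rfl
        _ = K2A.c F A 2 u v := by rw [mul_inv_cancel, mul_inv_cancel, one_mul, one_mul]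
  -- φ ∘ ψ = id
  have e1 : (φ.comp ψ).comp (MonoidHom.inl (K2SL F) (QN F × QN F)) =
      MonoidHom.inl (K2SL F) (QN F × QN F) := by
    apply K2SL_hom_ext
    intro u v
    rw [MonoidHom.comp_apply, MonoidHom.comp_apply, MonoidHom.inl_apply]
    show φ (ψ (K2SL.sym F u v, 1, 1)) = _
    rw [ψap]
    show φ (α (K2SL.sym F u v) * β 1 * γ 1) = _
    rw [map_one, map_one, mul_one, mul_one]
    show φ (symLift (sc_K2A A 0) (K2SL.sym F u v)) = _
    rw [symLift_sym, φc]
    show (K2SL.sym F u v, p2 0 (K2SL.sym F u v), p3 0 (K2SL.sym F u v)) = _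
    rw [p2_0, p3_0]
    rfl
  have e2 : ∀ b : QN F, φ (ψ (1, b, 1)) = ((1 : K2SL F), b, (1 : QN F)) := by
    have : (φ.comp ψ).comp ((MonoidHom.inr (K2SL F) (QN F × QN F)).comp
        (MonoidHom.inl (QN F) (QN F))) =
        (MonoidHom.inr (K2SL F) (QN F × QN F)).comp (MonoidHom.inl (QN F) (QN F)) := by
      apply QN_hom_ext
      intro u v
      simp only [MonoidHom.comp_apply, MonoidHom.inl_apply, MonoidHom.inr_apply]
      show φ (ψ (1, QuotientGroup.mk (K2SL.sym F u v), 1)) = _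
      rw [ψap]
      show φ (α 1 * β (QuotientGroup.mk (K2SL.sym F u v)) * γ 1) = _
      rw [map_one, map_one, one_mul, mul_one, βmk, hδ1, map_mul, map_inv, φc, φc]
      refine Prod.ext ?_ (Prod.ext ?_ ?_)
      · show K2SL.sym F u v * (K2SL.sym F u v)⁻¹ = 1
        rw [mul_inv_cancel]
      · show p2 1 (K2SL.sym F u v) * (p2 0 (K2SL.sym F u v))⁻¹ = _
        rw [p2_1, p2_0, MonoidHom.one_apply, inv_one, mul_one]
        rfl
      · show p3 1 (K2SL.sym F u v) * (p3 0 (K2SL.sym F u v))⁻¹ = 1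
        rw [p3_1, p3_0, MonoidHom.one_apply, inv_one, mul_one]
    intro b
    exact DFunLike.congr_fun this b
  have e3 : ∀ cc : QN F, φ (ψ (1, 1, cc)) = ((1 : K2SL F), (1 : QN F), cc) := by
    have : (φ.comp ψ).comp ((MonoidHom.inr (K2SL F) (QN F × QN F)).comp
        (MonoidHom.inr (QN F) (QN F))) =
        (MonoidHom.inr (K2SL F) (QN F × QN F)).comp (MonoidHom.inr (QN F) (QN F)) := by
      apply QN_hom_ext
      intro u v
      simp only [MonoidHom.comp_apply, MonoidHom.inl_apply, MonoidHom.inr_apply]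
      show φ (ψ (1, 1, QuotientGroup.mk (K2SL.sym F u v))) = _
      rw [ψap]
      show φ (α 1 * β 1 * γ (QuotientGroup.mk (K2SL.sym F u v))) = _
      rw [map_one, map_one, one_mul, one_mul, γmk, hδ2, map_mul, map_inv, φc, φc]
      refine Prod.ext ?_ (Prod.ext ?_ ?_)
      · show K2SL.sym F u v * (K2SL.sym F u v)⁻¹ = 1
        rw [mul_inv_cancel]
      · show p2 2 (K2SL.sym F u v) * (p2 1 (K2SL.sym F u v))⁻¹ = 1
        rw [p2_2, p2_1, QuotientGroup.mk'_apply, mul_inv_cancel]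
      · show p3 2 (K2SL.sym F u v) * (p3 1 (K2SL.sym F u v))⁻¹ = _
        rw [p3_2, p3_1, MonoidHom.one_apply, inv_one, mul_one]
        rfl
    intro cc
    exact DFunLike.congr_fun this cc
  have h2 : φ.comp ψ = MonoidHom.id (TT F) := by
    apply MonoidHom.ext
    rintro ⟨a, b, cc⟩
    rw [MonoidHom.comp_apply, MonoidHom.id_apply]
    have hx : ((a, b, cc) : TT F) = (a, 1, 1) * ((1, b, 1) * (1, 1, cc)) := by
      simp [Prod.mk_mul_mk]
    rw [hx]
    simp only [map_mul]
    have he1 : φ (ψ (a, 1, 1)) = (a, (1 : QN F), (1 : QN F)) := by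
      have := DFunLike.congr_fun e1 a
      simp at this
      exact this
    rw [he1, e2 b, e3 cc]
  exact ⟨MonoidHom.toMulEquiv φ ψ h1 h2⟩

end Psi

end K2Aux

open K2Aux in
/-- For the GCMs with rows `(2,-2,-2),(-2,2,-2),(-2,-2,2)` and `(2,-2,0),(-2,2,-2),(0,-2,2)`,
`K₂(A,F) ≅ K₂(2,F) × (K₂(2,F)/⟨{u²,v}⟩) × (K₂(2,F)/⟨{u²,v}⟩)` in both cases. -/
theorem K2A_rank3_class3 (F : Type) [Field F] :
    Nonempty (K2A F !![2, -2, -2; -2, 2, -2; -2, -2, 2] ≃*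
      (K2SL F × (K2SL F ⧸ K2SL.sqSubgroup F 1) × (K2SL F ⧸ K2SL.sqSubgroup F 1))) ∧
    Nonempty (K2A F !![2, -2, 0; -2, 2, -2; 0, -2, 2] ≃*
      (K2SL F × (K2SL F ⧸ K2SL.sqSubgroup F 1) × (K2SL F ⧸ K2SL.sqSubgroup F 1))) := by
  constructor
  · exact K2Aux.main _ (by intro i j; fin_cases i <;> fin_cases j <;> decide) (by intro i j; fin_cases i <;> fin_cases j <;> decide) (by decide) (by decide)
  · exact K2Aux.main _ (by intro i j; fin_cases i <;> fin_cases j <;> decide) (by intro i j; fin_cases i <;> fin_cases j <;> decide) (by decide) (by decide)
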